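/- Let A be a real m×n matrix, b ∈ ℝ^m, and c ∈ ℝ^n, and suppose the linear program: minimize c·y subject to A·y ≥ b and y ≥ 0 (componentwise) is feasible and attains its minimum. Then the minimum is attained at some feasible point y* having at most m nonzero coordinates. -/

import Mathlib

open Finset

/-- Reduction step: an optimal feasible point with more than `m` nonzeros can be replaced
by a feasible point with the same objective value and strictly smaller support. -/
lemma lp_reduce_aux
    (m n : ℕ) (A : Matrix (Fin m) (Fin n) ℝ) (b : Fin m → ℝ) (c : Fin n → ℝ)
    (y : Fin n → ℝ)
    (hfb : ∀ i, b i ≤ A.mulVec y i) (hfp : ∀ j, 0 ≤ y j)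
    (hopt : ∀ z : Fin n → ℝ, (∀ i, b i ≤ A.mulVec z i) → (∀ j, 0 ≤ z j) →
      ∑ j, c j * y j ≤ ∑ j, c j * z j)
    (hcard : m < (Finset.univ.filter fun j => y j ≠ 0).card) :
    ∃ y' : Fin n → ℝ, (∀ i, b i ≤ A.mulVec y' i) ∧ (∀ j, 0 ≤ y' j) ∧
      (∑ j, c j * y' j = ∑ j, c j * y j) ∧
      (Finset.univ.filter fun j => y' j ≠ 0).card
        < (Finset.univ.filter fun j => y j ≠ 0).card := by
  classical
  set S : Finset (Fin n) := Finset.univ.filter fun j => y j ≠ 0 with hSdef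
  have hmemS : ∀ j, j ∈ S ↔ y j ≠ 0 := by
    intro j; simp [hSdef]
  -- columns of A indexed by S are linearly dependent
  have hnotli : ¬ LinearIndependent ℝ (fun j : S => (fun i => A i j : Fin m → ℝ)) := by
    intro h
    have h1 := h.fintype_card_le_finrank
    rw [Module.finrank_fin_fun, Fintype.card_coe] at h1
    omega
  obtain ⟨g, hg0, j₀, hgj₀⟩ := Fintype.not_linearIndependent_iff.mp hnotli
  set d : Fin n → ℝ := fun j => if h : j ∈ S then g ⟨j, h⟩ else 0 with hddef
  have hdj₀ : d (j₀ : Fin n) ≠ 0 := by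
    simp only [hddef, dif_pos j₀.2]
    simpa using hgj₀
  have hdsupp : ∀ j, d j ≠ 0 → y j ≠ 0 := by
    intro j hj
    by_contra hy
    have : j ∉ S := by simp [hmemS, hy]
    simp [hddef, this] at hj
  -- A d = 0
  have hAd : ∀ i, ∑ j, A i j * d j = 0 := by
    intro i
    have h1 := congrFun hg0 i
    simp only [Finset.sum_apply, Pi.smul_apply, Pi.zero_apply, smul_eq_mul] at h1
    calc ∑ j, A i j * d j = ∑ j ∈ S, A i j * d j := by
          refine (Finset.sum_subset (Finset.subset_univ S) ?_).symm
          intro j _ hj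
          simp [hddef, hj]
      _ = ∑ j : S, A i (j : Fin n) * d (j : Fin n) := (Finset.sum_coe_sort S _).symm
      _ = ∑ j : S, g j * A i (j : Fin n) := by
          refine Finset.sum_congr rfl fun j _ => ?_
          rw [hddef]; simp [dif_pos j.2, mul_comm]
      _ = 0 := h1
  have hAmul : ∀ (t : ℝ) (i : Fin m),
      A.mulVec (fun j => y j + t * d j) i = A.mulVec y i := by
    intro t i
    show ∑ j, A i j * (y j + t * d j) = ∑ j, A i j * y j
    have h1 : ∀ j ∈ Finset.univ, A i j * (y j + t * d j)
        = A i j * y j + t * (A i j * d j) := fun j _ => by ring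
    rw [Finset.sum_congr rfl h1, Finset.sum_add_distrib, ← Finset.mul_sum, hAd i,
      mul_zero, add_zero]
  -- choose ε > 0 such that y + t d ≥ 0 for |t| ≤ ε
  have hU : (Finset.univ.filter fun j => d j ≠ 0).Nonempty :=
    ⟨j₀, by simp [hdj₀]⟩
  obtain ⟨j₁, hj₁U, hmin⟩ := Finset.exists_min_image _ (fun j => y j / |d j|) hU
  have hdj₁ : d j₁ ≠ 0 := by simpa using hj₁U
  have hyj₁ : 0 < y j₁ := lt_of_le_of_ne (hfp j₁) (Ne.symm (hdsupp _ hdj₁))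
  set ε : ℝ := y j₁ / |d j₁| with hεdef
  have hε : 0 < ε := div_pos hyj₁ (abs_pos.mpr hdj₁)
  have hnonneg : ∀ t : ℝ, |t| ≤ ε → ∀ j, 0 ≤ y j + t * d j := by
    intro t ht j
    by_cases hdj : d j = 0
    · simp [hdj, hfp j]
    · have h1 : ε ≤ y j / |d j| := hmin j (by simp [hdj])
      have h2 : |t * d j| ≤ ε * |d j| := by
        rw [abs_mul]
        exact mul_le_mul_of_nonneg_right ht (abs_nonneg _)
      have h3 : ε * |d j| ≤ y j := by
        calc ε * |d j| ≤ (y j / |d j|) * |d j| :=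
              mul_le_mul_of_nonneg_right h1 (abs_nonneg _)
          _ = y j := div_mul_cancel₀ _ (abs_ne_zero.mpr hdj)
      have := neg_abs_le (t * d j)
      linarith
  -- c · d = 0
  have hcd : ∑ j, c j * d j = 0 := by
    have key : ∀ t : ℝ, |t| ≤ ε → 0 ≤ t * ∑ j, c j * d j := by
      intro t ht
      have hfeas := hopt (fun j => y j + t * d j)
        (fun i => by rw [hAmul]; exact hfb i) (hnonneg t ht)
      have : ∑ j, c j * (y j + t * d j)
          = ∑ j, c j * y j + t * ∑ j, c j * d j := by
        rw [Finset.mul_sum, ← Finset.sum_add_distrib]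
        refine Finset.sum_congr rfl fun j _ => by ring
      rw [this] at hfeas
      linarith
    have h1 := key ε (by rw [abs_of_pos hε])
    have h2 := key (-ε) (by rw [abs_neg, abs_of_pos hε])
    nlinarith
  -- main perturbation argument for a direction with a negative coordinate
  have key : ∀ e : Fin n → ℝ, (∀ i, ∑ j, A i j * e j = 0) → (∑ j, c j * e j = 0) →
      (∀ j, e j ≠ 0 → y j ≠ 0) → (∃ j, e j < 0) →
      ∃ y' : Fin n → ℝ, (∀ i, b i ≤ A.mulVec y' i) ∧ (∀ j, 0 ≤ y' j) ∧
        (∑ j, c j * y' j = ∑ j, c j * y j) ∧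
        (Finset.univ.filter fun j => y' j ≠ 0).card < S.card := by
    intro e hAe hce hesupp ⟨jneg, hjneg⟩
    have hT : (Finset.univ.filter fun j => e j < 0).Nonempty := ⟨jneg, by simp [hjneg]⟩
    obtain ⟨j₂, hj₂T, hmin2⟩ := Finset.exists_min_image _ (fun j => y j / (-e j)) hT
    have hej₂ : e j₂ < 0 := by simpa using hj₂T
    have hyj₂ : 0 < y j₂ := lt_of_le_of_ne (hfp j₂) (Ne.symm (hesupp _ (ne_of_lt hej₂)))
    set t : ℝ := y j₂ / (-e j₂) with htdef
    have ht : 0 < t := div_pos hyj₂ (by linarith)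
    set y' : Fin n → ℝ := fun j => y j + t * e j with hy'def
    have hy'pos : ∀ j, 0 ≤ y' j := by
      intro j
      rcases lt_or_ge (e j) 0 with hje | hje
      · have h1 : t ≤ y j / (-e j) := hmin2 j (by simp [hje])
        have h2 : t * (-e j) ≤ y j := by
          calc t * (-e j) ≤ (y j / (-e j)) * (-e j) :=
                mul_le_mul_of_nonneg_right h1 (by linarith)
            _ = y j := div_mul_cancel₀ _ (by linarith)
        simp only [hy'def]; linarith
      · have : 0 ≤ t * e j := mul_nonneg ht.le hje
        simp only [hy'def]; linarith [hfp j]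
    have hy'A : ∀ i, b i ≤ A.mulVec y' i := by
      intro i
      have : A.mulVec y' i = A.mulVec y i := by
        show ∑ j, A i j * (y j + t * e j) = ∑ j, A i j * y j
        have h1 : ∀ j ∈ Finset.univ, A i j * (y j + t * e j)
            = A i j * y j + t * (A i j * e j) := fun j _ => by ring
        rw [Finset.sum_congr rfl h1, Finset.sum_add_distrib, ← Finset.mul_sum, hAe i,
          mul_zero, add_zero]
      rw [this]; exact hfb i
    have hy'obj : ∑ j, c j * y' j = ∑ j, c j * y j := by
      have : ∑ j, c j * y' j = ∑ j, c j * y j + t * ∑ j, c j * e j := by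
        simp only [hy'def]
        rw [Finset.mul_sum, ← Finset.sum_add_distrib]
        refine Finset.sum_congr rfl fun j _ => by ring
      rw [this, hce, mul_zero, add_zero]
    have hy'j₂ : y' j₂ = 0 := by
      have hne : e j₂ ≠ 0 := ne_of_lt hej₂
      simp only [hy'def, htdef]
      field_simp
      ring
    have hsub : (Finset.univ.filter fun j => y' j ≠ 0) ⊆ S.erase j₂ := by
      intro j hj
      simp only [Finset.mem_filter, Finset.mem_univ, true_and] at hj
      rw [Finset.mem_erase, hmemS]
      constructor
      · rintro rfl; exact hj hy'j₂
      · intro hyj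
        have hej : e j = 0 := by
          by_contra h; exact hesupp j h hyj
        simp [hy'def, hej, hyj] at hj
    refine ⟨y', hy'A, hy'pos, hy'obj, ?_⟩
    calc (Finset.univ.filter fun j => y' j ≠ 0).card ≤ (S.erase j₂).card :=
          Finset.card_le_card hsub
      _ < S.card := Finset.card_erase_lt_of_mem ((hmemS j₂).mpr (ne_of_gt hyj₂))
  rcases lt_or_ge (d j₁) 0 with hsign | hsign
  · exact key d hAd hcd hdsupp ⟨j₁, hsign⟩
  · refine key (fun j => -(d j)) ?_ ?_ ?_ ?_
    · intro i
      have := hAd i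
      simp only [mul_neg, Finset.sum_neg_distrib]
      linarith
    · simp only [mul_neg, Finset.sum_neg_distrib]
      linarith [hcd]
    · intro j hj
      exact hdsupp j (by simpa using hj)
    · exact ⟨j₁, by simp; exact lt_of_le_of_ne hsign (Ne.symm hdj₁)⟩

theorem lp_optimum_attained_with_few_nonzeros
    (m n : ℕ) (A : Matrix (Fin m) (Fin n) ℝ) (b : Fin m → ℝ) (c : Fin n → ℝ)
    (y₀ : Fin n → ℝ)
    (hy₀feas : (∀ i, b i ≤ A.mulVec y₀ i) ∧ (∀ j, 0 ≤ y₀ j))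
    (hy₀opt : ∀ y : Fin n → ℝ, (∀ i, b i ≤ A.mulVec y i) → (∀ j, 0 ≤ y j) →
      ∑ j, c j * y₀ j ≤ ∑ j, c j * y j) :
    ∃ ystar : Fin n → ℝ,
      (∀ i, b i ≤ A.mulVec ystar i) ∧ (∀ j, 0 ≤ ystar j) ∧
      (∀ y : Fin n → ℝ, (∀ i, b i ≤ A.mulVec y i) → (∀ j, 0 ≤ y j) →
        ∑ j, c j * ystar j ≤ ∑ j, c j * y j) ∧
      (Finset.univ.filter fun j => ystar j ≠ 0).card ≤ m := by
  classical
  obtain ⟨hA₀, hp₀⟩ := hy₀feas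
  set P : ℕ → Prop := fun k => ∃ y : Fin n → ℝ,
    (∀ i, b i ≤ A.mulVec y i) ∧ (∀ j, 0 ≤ y j) ∧
    (∑ j, c j * y j = ∑ j, c j * y₀ j) ∧
    (Finset.univ.filter fun j => y j ≠ 0).card ≤ k with hPdef
  have hPex : ∃ k, P k :=
    ⟨(Finset.univ.filter fun j => y₀ j ≠ 0).card, y₀, hA₀, hp₀, rfl, le_refl _⟩
  set k₀ := Nat.find hPex with hk₀def
  obtain ⟨y, hyA, hyp, hyobj, hycard⟩ := Nat.find_spec hPex
  have hyopt : ∀ z : Fin n → ℝ, (∀ i, b i ≤ A.mulVec z i) → (∀ j, 0 ≤ z j) →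
      ∑ j, c j * y j ≤ ∑ j, c j * z j := by
    intro z hzA hzp
    rw [hyobj]
    exact hy₀opt z hzA hzp
  have hk₀m : k₀ ≤ m := by
    by_contra hlt
    push_neg at hlt
    -- card of support of y equals k₀
    have hcard_eq : (Finset.univ.filter fun j => y j ≠ 0).card = k₀ := by
      refine le_antisymm hycard ?_
      exact Nat.find_min' hPex ⟨y, hyA, hyp, hyobj, le_refl _⟩
    have hmlt : m < (Finset.univ.filter fun j => y j ≠ 0).card := by omega
    obtain ⟨y', hA', hp', hobj', hcard'⟩ :=
      lp_reduce_aux m n A b c y hyA hyp hyopt hmlt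
    have : P (Finset.univ.filter fun j => y' j ≠ 0).card :=
      ⟨y', hA', hp', by rw [hobj', hyobj], le_refl _⟩
    have := Nat.find_min' hPex this
    omega
  exact ⟨y, hyA, hyp, hyopt, le_trans hycard hk₀m⟩
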